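/- Let τ > 0, α = 1, and suppose λ is a real number with λ ≤ -1 (playing the role of the minimum eigenvalue of the adjacency matrix). If τ < (1/(-λ-1))^{1/2} · exp(1/(2(-λ-1))) (interpreting the bound as +∞ when λ = -1), then for every y ≥ 0 the best-response derivative satisfies 1/λ < φ'(y) < 0, where φ(y) = (1/τ)·W(τ²e^{-τy}). Equivalently, the network normality condition W(τ²) < 1/(-λ-1) holds. -/

import Mathlib

/-- The Lambert W function on `[0,∞)`: the inverse of `x ↦ x * exp x` on `[0,∞)`. -/
noncomputable def lambertW (x : ℝ) : ℝ :=
  Function.invFunOn (fun t => t * Real.exp t) (Set.Ici 0) x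

lemma lw_strictMono : StrictMonoOn (fun t => t * Real.exp t) (Set.Ici 0) := by
  intro a ha b hb hab
  simp only [Set.mem_Ici] at ha hb
  have h1 : Real.exp a ≤ Real.exp b := Real.exp_le_exp.2 hab.le
  dsimp only
  nlinarith [Real.exp_pos a, Real.exp_pos b, mul_le_mul_of_nonneg_left h1 ha,
    mul_lt_mul_of_pos_right hab (Real.exp_pos b)]

lemma lw_exists (x : ℝ) (hx : 0 ≤ x) :
    ∃ t ∈ Set.Ici (0 : ℝ), t * Real.exp t = x := by
  have hc : ContinuousOn (fun t => t * Real.exp t) (Set.Icc 0 x) :=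
    (continuous_id.mul Real.continuous_exp).continuousOn
  have hsub := intermediate_value_Icc hx hc
  have hx' : x ∈ Set.Icc ((fun t => t * Real.exp t) 0) ((fun t => t * Real.exp t) x) := by
    simp only [Set.mem_Icc, zero_mul]
    constructor
    · exact hx
    · nlinarith [Real.one_le_exp hx]
  obtain ⟨t, ht, hft⟩ := hsub hx'
  exact ⟨t, ht.1, hft⟩

lemma lw_spec (x : ℝ) (hx : 0 ≤ x) :
    0 ≤ lambertW x ∧ lambertW x * Real.exp (lambertW x) = x := by
  obtain ⟨t, ht, hft⟩ := lw_exists x hx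
  have hex : ∃ a ∈ Set.Ici (0 : ℝ), (fun t => t * Real.exp t) a = x := ⟨t, ht, hft⟩
  exact ⟨Function.invFunOn_mem hex, Function.invFunOn_eq hex⟩

lemma lw_pos {x : ℝ} (hx : 0 < x) : 0 < lambertW x := by
  obtain ⟨h0, hfe⟩ := lw_spec x hx.le
  rcases h0.lt_or_eq with h | h
  · exact h
  · exfalso; rw [← h] at hfe; simp at hfe; linarith [hfe ▸ hx]

lemma lw_lt_lw {x y : ℝ} (hx : 0 ≤ x) (hxy : x < y) : lambertW x < lambertW y := by
  obtain ⟨hx0, hxe⟩ := lw_spec x hx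
  obtain ⟨hy0, hye⟩ := lw_spec y (hx.trans hxy.le)
  have := lw_strictMono.lt_iff_lt (Set.mem_Ici.2 hx0) (Set.mem_Ici.2 hy0)
  rw [← this]
  rw [hxe, hye]; exact hxy

lemma lw_le_lw {x y : ℝ} (hx : 0 ≤ x) (hxy : x ≤ y) : lambertW x ≤ lambertW y := by
  rcases hxy.lt_or_eq with h | h
  · exact (lw_lt_lw hx h).le
  · rw [h]

lemma lw_f (t : ℝ) (ht : 0 ≤ t) : lambertW (t * Real.exp t) = t := by
  have hx : 0 ≤ t * Real.exp t := mul_nonneg ht (Real.exp_pos t).le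
  obtain ⟨h0, hfe⟩ := lw_spec _ hx
  exact lw_strictMono.injOn (Set.mem_Ici.2 h0) (Set.mem_Ici.2 ht) hfe

/-- For τ > 0, α = 1, and λ ≤ -1 (the minimum adjacency eigenvalue), if
`τ < (1/(-λ-1))^(1/2) · exp(1/(2(-λ-1)))` (the bound being +∞ when λ = -1), then
`1/λ < φ'(y) < 0` for every `y ≥ 0`, where
`φ'(y) = -W(τ²e^{-τy})/(1+W(τ²e^{-τy}))`; equivalently the network normality condition
`W(τ²) < 1/(-λ-1)` holds (when λ < -1). -/
theorem network_normality_condition (τ lam : ℝ) (hτ : 0 < τ) (hlam : lam ≤ -1)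
    (hbound : lam = -1 ∨
      τ < (1 / (-lam - 1)) ^ ((1 : ℝ) / 2) * Real.exp (1 / (2 * (-lam - 1)))) :
    (∀ y : ℝ, 0 ≤ y →
      1 / lam < -(lambertW (τ ^ 2 * Real.exp (-τ * y)) /
          (1 + lambertW (τ ^ 2 * Real.exp (-τ * y)))) ∧
      -(lambertW (τ ^ 2 * Real.exp (-τ * y)) /
          (1 + lambertW (τ ^ 2 * Real.exp (-τ * y)))) < 0) ∧
    (lam < -1 → lambertW (τ ^ 2) < 1 / (-lam - 1)) := by
  -- main quantitative fact: if lam < -1 then W(τ²) < 1/(-lam-1)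
  have key : lam < -1 → lambertW (τ ^ 2) < 1 / (-lam - 1) := by
    intro hl
    have hεpos : (0:ℝ) < 1 / (-lam - 1) := by
      apply div_pos one_pos; linarith
    set ε : ℝ := 1 / (-lam - 1) with hε
    have hb : τ < ε ^ ((1 : ℝ) / 2) * Real.exp (1 / (2 * (-lam - 1))) := by
      rcases hbound with h | h
      · exfalso; linarith
      · exact h
    have hexp : (1 : ℝ) / (2 * (-lam - 1)) = ε / 2 := by
      rw [hε]; field_simp
    rw [hexp] at hb
    have hsq : (ε ^ ((1 : ℝ) / 2)) ^ 2 = ε := by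
      rw [← Real.rpow_natCast (ε ^ ((1:ℝ)/2)) 2, ← Real.rpow_mul hεpos.le]
      norm_num
    have hesq : Real.exp (ε / 2) ^ 2 = Real.exp ε := by
      rw [← Real.exp_nat_mul]; norm_num; try ring_nf
    have hτ2 : τ ^ 2 < ε * Real.exp ε := by
      have h1 : τ ^ 2 < (ε ^ ((1 : ℝ) / 2) * Real.exp (ε / 2)) ^ 2 := by
        apply pow_lt_pow_left₀ hb hτ.le
        norm_num
      calc τ ^ 2 < (ε ^ ((1 : ℝ) / 2) * Real.exp (ε / 2)) ^ 2 := h1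
        _ = (ε ^ ((1 : ℝ) / 2)) ^ 2 * Real.exp (ε / 2) ^ 2 := by ring
        _ = ε * Real.exp ε := by rw [hsq, hesq]
    have := lw_lt_lw (by positivity : (0:ℝ) ≤ τ ^ 2) hτ2
    rwa [lw_f ε hεpos.le] at this
  refine ⟨fun y hy => ?_, key⟩
  set u : ℝ := τ ^ 2 * Real.exp (-τ * y) with hu
  have hupos : 0 < u := by positivity
  set w : ℝ := lambertW u with hw
  have hwpos : 0 < w := lw_pos hupos
  have hw1 : 0 < 1 + w := by linarith
  have hlam0 : lam < 0 := by linarith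
  -- key inequality: w * (-lam - 1) < 1
  have hkey : w * (-lam - 1) < 1 := by
    rcases hlam.lt_or_eq with hl | hl
    · have h1 : u ≤ τ ^ 2 := by
        rw [hu]
        nlinarith [Real.exp_le_one_iff.2 (by nlinarith : -τ * y ≤ 0),
          sq_nonneg τ]
      have h2 : w ≤ lambertW (τ ^ 2) := lw_le_lw hupos.le h1
      have h3 := key hl
      have h4 : w < 1 / (-lam - 1) := lt_of_le_of_lt h2 h3
      have h5 : (0:ℝ) < -lam - 1 := by linarith
      rw [lt_div_iff₀ h5] at h4
      linarith
    · rw [hl]; norm_num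
  constructor
  · rw [div_lt_iff_of_neg hlam0]
    have heq : -(w / (1 + w)) * lam = -(w * lam) / (1 + w) := by ring
    rw [heq, div_lt_one hw1]
    nlinarith
  · have : 0 < w / (1 + w) := div_pos hwpos hw1
    linarith
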